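/- Let P be a locally finite unique-cover-modular poset with a least element ⊥. Then P is graded: there exists a function ρ : P → ℕ with ρ(⊥) = 0 such that ρ(b) = ρ(a) + 1 whenever a ⋖ b in P. -/

import Mathlib

/-- A poset is unique-cover-modular if any two distinct elements covering a common
element, or covered by a common element, are covered by a unique common element and
cover a unique common element. -/
def UCM (P : Type*) [PartialOrder P] : Prop :=
  ∀ x y : P, x ≠ y →
    ((∃ a, a ⋖ x ∧ a ⋖ y) ∨ (∃ b, x ⋖ b ∧ y ⋖ b)) →
    (∃! a, a ⋖ x ∧ a ⋖ y) ∧ (∃! b, x ⋖ b ∧ y ⋖ b)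

section Aux

variable {P : Type*} [PartialOrder P] [LocallyFiniteOrder P] [OrderBot P]

/-- `Ch n x` : there is a covering chain of length `n` from `⊥` to `x`. -/
def Ch : ℕ → P → Prop
  | 0, x => x = ⊥
  | (n+1), x => ∃ y, Ch n y ∧ y ⋖ x

lemma ch_exists_aux : ∀ (c : ℕ) (x : P), (Finset.Icc ⊥ x).card = c → ∃ n, Ch n x := by
  intro c
  induction c using Nat.strong_induction_on with
  | _ c ih =>
    intro x hc
    rcases eq_or_lt_of_le (bot_le : (⊥:P) ≤ x) with h | h
    · exact ⟨0, h.symm⟩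
    · obtain ⟨y, hy, hmax⟩ : ∃ y ∈ Finset.Ico ⊥ x, ∀ z ∈ Finset.Ico ⊥ x, ¬ y < z := by
        obtain ⟨y, hy⟩ := Finset.exists_maximal (s := Finset.Ico ⊥ x)
          ⟨⊥, Finset.mem_Ico.2 ⟨le_rfl, h⟩⟩
        exact ⟨y, hy.1, fun z hz hyz => hyz.not_ge (hy.2 hz hyz.le)⟩
      rw [Finset.mem_Ico] at hy
      have hcov : y ⋖ x :=
        ⟨hy.2, fun z hz hz2 => hmax z (Finset.mem_Ico.2 ⟨bot_le, hz2⟩) hz⟩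
      have hsub : Finset.Icc (⊥:P) y ⊂ Finset.Icc ⊥ x := by
        refine ⟨Finset.Icc_subset_Icc le_rfl hy.2.le, fun hsup => ?_⟩
        have := hsup (Finset.mem_Icc.2 ⟨bot_le, le_rfl⟩)
        exact absurd (Finset.mem_Icc.1 this).2 hy.2.not_ge
      obtain ⟨n, hn⟩ := ih _ (hc ▸ Finset.card_lt_card hsub) y rfl
      exact ⟨n + 1, y, hn, hcov⟩

lemma ch_exists (x : P) : ∃ n, Ch n x := ch_exists_aux _ x rfl

lemma ch_unique (hucm : UCM P) :
    ∀ n, ∀ x : P, Ch n x → ∀ m, Ch m x → m = n := by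
  intro n
  induction n using Nat.strong_induction_on with
  | _ n ih =>
    intro x hx m hm
    cases n with
    | zero =>
      cases m with
      | zero => rfl
      | succ l =>
        obtain ⟨b, _, hbcov⟩ := hm
        rw [show x = ⊥ from hx] at hbcov
        exact absurd hbcov.lt not_lt_bot
    | succ k =>
      obtain ⟨a, ha, hacov⟩ := hx
      cases m with
      | zero =>
        rw [show x = ⊥ from hm] at hacov
        exact absurd hacov.lt not_lt_bot
      | succ l =>
        obtain ⟨b, hb, hbcov⟩ := hm
        by_cases hab : a = b
        · subst hab
          have := ih k (Nat.lt_succ_self k) a ha l hb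
          omega
        · obtain ⟨⟨c, ⟨hca, hcb⟩, _⟩, _⟩ := hucm a b hab (Or.inr ⟨x, hacov, hbcov⟩)
          obtain ⟨j, hj⟩ := ch_exists c
          have h1 : Ch (j+1) a := ⟨c, hj, hca⟩
          have hk : j + 1 = k := ih k (Nat.lt_succ_self k) a ha (j+1) h1
          have h2 : Ch (j+1) b := ⟨c, hj, hcb⟩
          have hl : l = j + 1 := ih (j+1) (by omega) b h2 l hb
          omega

end Aux

/-- A locally finite unique-cover-modular poset with a least element is graded. -/
theorem stmt17 {P : Type*} [PartialOrder P] [LocallyFiniteOrder P] [OrderBot P]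
    (hucm : UCM P) :
    ∃ ρ : P → ℕ, ρ ⊥ = 0 ∧ ∀ a b : P, a ⋖ b → ρ b = ρ a + 1 := by
  classical
  refine ⟨fun x => (ch_exists x).choose, ?_, ?_⟩
  · exact ch_unique hucm 0 ⊥ rfl _ (ch_exists ⊥).choose_spec
  · intro a b hab
    have h1 : Ch ((ch_exists a).choose + 1) b := ⟨a, (ch_exists a).choose_spec, hab⟩
    exact ch_unique hucm _ b h1 _ (ch_exists b).choose_spec
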